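/- Let x_1,…,x_m ∈ ℝ^d satisfy max_i ‖x_i‖ ≤ 1 and be separable with margin γ ∈ (0,1]. For the exponential loss ℓ(z) = exp(−z), the empirical risk L̂(w) = (1/m)Σ_i ℓ(x_iᵀw) satisfies, for every w ∈ ℝ^d, the inequality ‖∇L̂(w)‖² ≥ γ² · L̂(w)². -/

import Mathlib

open scoped RealInnerProductSpace

/-- key differential inequality. For the exponential loss
`ℓ(z) = exp(−z)` and a dataset separable with margin `γ`, the empirical risk
satisfies `‖∇L̂(w)‖² ≥ γ²·L̂(w)²` for every `w`. -/
theorem stmt_3 {d m : ℕ} (hm : 0 < m)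
    (x : Fin m → EuclideanSpace ℝ (Fin d)) (hx : ∀ i, ‖x i‖ ≤ 1)
    (γ : ℝ) (hγ : γ ∈ Set.Ioc (0 : ℝ) 1)
    (w₀ : EuclideanSpace ℝ (Fin d)) (hw₀ : ‖w₀‖ = 1)
    (hsep : ∀ i, γ ≤ ⟪x i, w₀⟫)
    (L : EuclideanSpace ℝ (Fin d) → ℝ)
    (hL : ∀ v, L v = (1 / m) * ∑ i, Real.exp (-⟪x i, v⟫)) :
    ∀ v : EuclideanSpace ℝ (Fin d), γ ^ 2 * (L v) ^ 2 ≤ ‖gradient L v‖ ^ 2 := by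
  intro v
  have hγ0 : 0 < γ := hγ.1
  set c : Fin m → ℝ := fun i => Real.exp (-⟪x i, v⟫) with hc
  set g : EuclideanSpace ℝ (Fin d) := ∑ i, (-(1/(m:ℝ)) * c i) • x i with hg
  have hcpos : ∀ i, 0 < c i := fun i => Real.exp_pos _
  have hm0 : (0:ℝ) < (m:ℝ) := by exact_mod_cast hm
  -- the gradient of L
  have hfd : HasFDerivAt L (∑ i, ((-(1/(m:ℝ)) * c i) • (innerSL ℝ (x i)))) v := by
    have hterm : ∀ i : Fin m,
        HasFDerivAt (fun w : EuclideanSpace ℝ (Fin d) => (1/(m:ℝ)) * Real.exp (-⟪x i, w⟫))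
          ((-(1/(m:ℝ)) * c i) • (innerSL ℝ (x i))) v := by
      intro i
      have h1 : HasFDerivAt (fun w : EuclideanSpace ℝ (Fin d) => ⟪x i, w⟫)
          (innerSL ℝ (x i)) v := (innerSL ℝ (x i)).hasFDerivAt
      have h3 := (h1.neg.exp).const_mul (1/(m:ℝ))
      refine h3.congr_fderiv ?_
      ext u
      simp [hc]
      ring
    have hsum := HasFDerivAt.fun_sum (fun i (_ : i ∈ Finset.univ) => hterm i)
    have hLeq : L = fun w => ∑ i, (1/(m:ℝ)) * Real.exp (-⟪x i, w⟫) := by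
      funext w; rw [hL, Finset.mul_sum]
    rw [hLeq]
    exact hsum
  have htd : (InnerProductSpace.toDual ℝ (EuclideanSpace ℝ (Fin d)) g :
      EuclideanSpace ℝ (Fin d) →L[ℝ] ℝ)
      = ∑ i, ((-(1/(m:ℝ)) * c i) • (innerSL ℝ (x i))) := by
    ext u
    simp [InnerProductSpace.toDual_apply_apply, hg, sum_inner, real_inner_smul_left]
  have hgradL : HasGradientAt L g v := by
    rw [hasGradientAt_iff_hasFDerivAt, htd]; exact hfd
  have hgv : gradient L v = g := hgradL.gradient
  rw [hgv]
  -- positivity of L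
  have hLv : L v = (1/(m:ℝ)) * ∑ i, c i := by rw [hL]
  have hL0 : 0 ≤ L v := by
    rw [hLv]
    positivity
  -- key bound: γ * L v ≤ ‖g‖
  have hinner : -⟪g, w₀⟫ = (1/(m:ℝ)) * ∑ i, c i * ⟪x i, w₀⟫ := by
    rw [hg, sum_inner, Finset.mul_sum, ← Finset.sum_neg_distrib]
    congr 1; funext i
    rw [real_inner_smul_left]; ring
  have hlow : γ * L v ≤ -⟪g, w₀⟫ := by
    rw [hinner, hLv, Finset.mul_sum, Finset.mul_sum, Finset.mul_sum]
    apply Finset.sum_le_sum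
    intro i _
    have := hsep i
    have hci := (hcpos i).le
    have : γ * c i ≤ c i * ⟪x i, w₀⟫ := by
      rw [mul_comm γ (c i)]
      exact mul_le_mul_of_nonneg_left this hci
    have h2 := mul_le_mul_of_nonneg_left this (by positivity : (0:ℝ) ≤ 1/(m:ℝ))
    linarith [h2]
  have hcs : -⟪g, w₀⟫ ≤ ‖g‖ := by
    have h1 : -⟪g, w₀⟫ = ⟪-g, w₀⟫ := by rw [inner_neg_left]
    rw [h1]
    calc ⟪-g, w₀⟫ ≤ ‖-g‖ * ‖w₀‖ := real_inner_le_norm _ _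
      _ = ‖g‖ := by rw [norm_neg, hw₀, mul_one]
  have hkey : γ * L v ≤ ‖g‖ := hlow.trans hcs
  have h1 : 0 ≤ γ * L v := mul_nonneg hγ0.le hL0
  calc γ ^ 2 * (L v) ^ 2 = (γ * L v) ^ 2 := by ring
    _ ≤ ‖g‖ ^ 2 := by nlinarith
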